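/- There is a constant c' such that for all n, every trifferent code C ⊆ {0,1,2}^n in which each codeword contains exactly two 2's satisfies |C| ≤ c' · n^(5/3). -/

import Mathlib

def Trifferent {n : ℕ} (C : Finset (Fin n → Fin 3)) : Prop :=
  ∀ x ∈ C, ∀ y ∈ C, ∀ z ∈ C, x ≠ y → x ≠ z → y ≠ z →
    ∃ i : Fin n, ({x i, y i, z i} : Set (Fin 3)) = Set.univ

namespace TwoBdd
open Finset

variable {n : ℕ} {C : Finset (Fin n → Fin 3)}

/-- The set of positions where a codeword has a 2. -/
def twos (x : Fin n → Fin 3) : Finset (Fin n) := Finset.univ.filter fun i => x i = 2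

lemma mem_twos {x : Fin n → Fin 3} {i : Fin n} : i ∈ twos x ↔ x i = 2 := by simp [twos]

/-- The graph on positions: `p ~ q` iff some codeword has its 2s exactly at `{p, q}`. -/
def Adj (C : Finset (Fin n → Fin 3)) (p q : Fin n) : Prop :=
  p ≠ q ∧ ∃ x ∈ C, twos x = {p, q}

instance (C : Finset (Fin n → Fin 3)) (p q : Fin n) : Decidable (Adj C p q) := by
  unfold Adj; infer_instance

lemma Adj.symm' {p q : Fin n} (h : Adj C p q) : Adj C q p := by
  obtain ⟨h1, x, hx, ht⟩ := h
  exact ⟨h1.symm, x, hx, by rwa [Finset.pair_comm]⟩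

noncomputable def pick (C : Finset (Fin n → Fin 3)) (p q : Fin n) : Fin n → Fin 3 :=
  if h : ∃ x ∈ C, twos x = {p, q} then h.choose else fun _ => 0

lemma pick_spec {p q : Fin n} (h : Adj C p q) :
    pick C p q ∈ C ∧ twos (pick C p q) = {p, q} := by
  rw [pick, dif_pos h.2]
  exact h.2.choose_spec

lemma univ3' : ∀ p q r : Fin 3, (∀ t : Fin 3, t = p ∨ t = q ∨ t = r) →
    ((p ≠ q ∧ p ≠ r ∧ q ≠ r) ∧ (p = 2 ∨ q = 2 ∨ r = 2)) := by decide

lemma fin3_pigeon : ∀ p q r : Fin 3, p ≠ q → p ≠ r → q ≠ r → p ≠ 2 → q ≠ 2 → r ≠ 2 → False := by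
  decide

lemma tri_extract (hC : Trifferent C) {x y z : Fin n → Fin 3} (hx : x ∈ C) (hy : y ∈ C)
    (hz : z ∈ C) (hxy : x ≠ y) (hxz : x ≠ z) (hyz : y ≠ z) :
    ∃ i : Fin n, (x i ≠ y i ∧ x i ≠ z i ∧ y i ≠ z i) ∧ (x i = 2 ∨ y i = 2 ∨ z i = 2) := by
  obtain ⟨i, hi⟩ := hC x hx y hy z hz hxy hxz hyz
  rw [Set.eq_univ_iff_forall] at hi
  simp only [Set.mem_insert_iff, Set.mem_singleton_iff] at hi
  exact ⟨i, univ3' _ _ _ hi⟩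

lemma twos_eval {x : Fin n → Fin 3} {p q i : Fin n} (h : twos x = {p, q}) :
    x i = 2 ↔ i = p ∨ i = q := by
  rw [← mem_twos, h]; simp

lemma ne_of_twos {x y : Fin n → Fin 3} (h : twos x ≠ twos y) : x ≠ y := fun e => h (by rw [e])

lemma pair_ne {p q r s : Fin n} (h : p ≠ r ∧ p ≠ s) : ({p, q} : Finset (Fin n)) ≠ {r, s} := by
  intro e
  have : p ∈ ({r, s} : Finset (Fin n)) := by rw [← e]; simp
  simp only [Finset.mem_insert, Finset.mem_singleton] at this
  tauto

lemma step (hC : Trifferent C) {p r u v : Fin n}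
    {x1 x2 y : Fin n → Fin 3} (hx1 : x1 ∈ C) (hx2 : x2 ∈ C) (hy : y ∈ C)
    (ht1 : twos x1 = {p, u}) (ht2 : twos x2 = {p, v}) (hty : twos y = {r, v})
    (hpr : p ≠ r) (hpu : p ≠ u) (hpv : p ≠ v) (hru : r ≠ u) (hrv : r ≠ v) (huv : u ≠ v)
    (hsig : x1 r = x2 r) : x2 u ≠ y u := by
  have h12 : x1 ≠ x2 := ne_of_twos (by
    rw [ht1, ht2]
    intro e
    have : u ∈ ({p, v} : Finset (Fin n)) := by rw [← e]; simp
    simp only [Finset.mem_insert, Finset.mem_singleton] at this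
    rcases this with h | h
    · exact hpu h.symm
    · exact huv h)
  have h1y : x1 ≠ y := ne_of_twos (by rw [ht1, hty]; exact pair_ne ⟨hpr, hpv⟩)
  have h2y : x2 ≠ y := ne_of_twos (by rw [ht2, hty]; exact pair_ne ⟨hpr, hpv⟩)
  obtain ⟨i, ⟨d12, d1y, d2y⟩, h2⟩ := tri_extract hC hx1 hx2 hy h12 h1y h2y
  rcases h2 with h2 | h2 | h2
  · rcases (twos_eval ht1).mp h2 with rfl | rfl
    · exact absurd (h2.trans ((twos_eval ht2).mpr (Or.inl rfl)).symm) d12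
    · exact d2y
  · rcases (twos_eval ht2).mp h2 with rfl | rfl
    · exact absurd (((twos_eval ht1).mpr (Or.inl rfl)).trans h2.symm) d12
    · exact absurd (h2.trans ((twos_eval hty).mpr (Or.inr rfl)).symm) d2y
  · rcases (twos_eval hty).mp h2 with rfl | rfl
    · exact absurd hsig d12
    · exact absurd (((twos_eval ht2).mpr (Or.inr rfl)).trans h2.symm) d2y

/-- The graph is `K_{3,28}`-free: three distinct vertices have at most 27 common neighbours. -/
lemma common_le (hC : Trifferent C) {a b c : Fin n} (hab : a ≠ b) (hac : a ≠ c) (hbc : b ≠ c) :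
    (Finset.univ.filter fun v => Adj C a v ∧ Adj C b v ∧ Adj C c v).card ≤ 27 := by
  by_contra hcon
  push_neg at hcon
  have hlt : (Finset.univ : Finset (Fin 3 × Fin 3 × Fin 3)).card <
      (Finset.univ.filter fun v => Adj C a v ∧ Adj C b v ∧ Adj C c v).card := by
    simpa using hcon
  obtain ⟨u, hu, v, hv, huv, hfe⟩ := Finset.exists_ne_map_eq_of_card_lt_of_maps_to hlt
    (f := fun v => (pick C a v b, pick C a v c, pick C b v c)) (fun x _ => Finset.mem_univ _)
  simp only [Finset.mem_filter] at hu hv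
  obtain ⟨-, hau, hbu, hcu⟩ := hu
  obtain ⟨-, hav, hbv, hcv⟩ := hv
  obtain ⟨hxu, htxu⟩ := pick_spec hau
  obtain ⟨hxv, htxv⟩ := pick_spec hav
  obtain ⟨hyu, htyu⟩ := pick_spec hbu
  obtain ⟨hyv, htyv⟩ := pick_spec hbv
  obtain ⟨hzv, htzv⟩ := pick_spec hcv
  have sig1 : pick C a u b = pick C a v b := congrArg (Prod.fst) hfe
  have sig2 : pick C a u c = pick C a v c := congrArg (Prod.fst ∘ Prod.snd) hfe
  have sig3 : pick C b u c = pick C b v c := congrArg (Prod.snd ∘ Prod.snd) hfe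
  have H1 : pick C a v u ≠ pick C b v u :=
    step hC hxu hxv hyv htxu htxv htyv hab hau.1 hav.1 hbu.1 hbv.1 huv sig1
  have H2 : pick C a v u ≠ pick C c v u :=
    step hC hxu hxv hzv htxu htxv htzv hac hau.1 hav.1 hcu.1 hcv.1 huv sig2
  have H3 : pick C b v u ≠ pick C c v u :=
    step hC hyu hyv hzv htyu htyv htzv hbc hbu.1 hbv.1 hcu.1 hcv.1 huv sig3
  have e1 : pick C a v u ≠ 2 := by
    rw [Ne, twos_eval htxv]; push_neg; exact ⟨fun e => hau.1 e.symm, huv⟩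
  have e2 : pick C b v u ≠ 2 := by
    rw [Ne, twos_eval htyv]; push_neg; exact ⟨fun e => hbu.1 e.symm, huv⟩
  have e3 : pick C c v u ≠ 2 := by
    rw [Ne, twos_eval htzv]; push_neg; exact ⟨fun e => hcu.1 e.symm, huv⟩
  exact fin3_pigeon _ _ _ H1 H2 H3 e1 e2 e3

/-- At most two codewords share the same set of 2-positions. -/
lemma fiber_le (hC : Trifferent C) (s : Finset (Fin n)) :
    (C.filter fun x => twos x = s).card ≤ 2 := by
  by_contra h
  push_neg at h
  obtain ⟨x, y, z, hx, hy, hz, hxy, hxz, hyz⟩ := Finset.two_lt_card_iff.mp h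
  simp only [Finset.mem_filter] at hx hy hz
  obtain ⟨i, ⟨d12, d1y, d2y⟩, h2⟩ := tri_extract hC hx.1 hy.1 hz.1 hxy hxz hyz
  have kx : x i = 2 ↔ i ∈ s := by rw [← mem_twos, hx.2]
  have ky : y i = 2 ↔ i ∈ s := by rw [← mem_twos, hy.2]
  have kz : z i = 2 ↔ i ∈ s := by rw [← mem_twos, hz.2]
  rcases h2 with h2 | h2 | h2
  · exact d12 (h2.trans (ky.mpr (kx.mp h2)).symm)
  · exact d12 ((kx.mpr (ky.mp h2)).trans h2.symm)
  · exact d1y ((kx.mpr (kz.mp h2)).trans h2.symm)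

def nbhd (C : Finset (Fin n → Fin 3)) (p : Fin n) : Finset (Fin n) :=
  Finset.univ.filter fun q => Adj C p q

/-- Double counting triples of common neighbours. -/
lemma sum_choose_le (hC : Trifferent C) :
    ∑ v : Fin n, ((nbhd C v).card.choose 3) ≤ 27 * n.choose 3 := by
  classical
  set W : Finset (Fin n × Finset (Fin n)) :=
    (Finset.univ ×ˢ (Finset.univ : Finset (Fin n)).powersetCard 3).filter
      fun vt => vt.2 ⊆ nbhd C vt.1 with hW
  have hfst : W.card = ∑ v : Fin n, ((nbhd C v).card.choose 3) := by
    rw [Finset.card_eq_sum_card_fiberwise (f := Prod.fst) (t := Finset.univ)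
      (fun x _ => mem_univ _)]
    refine Finset.sum_congr rfl fun v _ => ?_
    rw [← Finset.card_powersetCard]
    apply Finset.card_nbij' Prod.snd (fun T => (v, T))
    · intro w hw
      simp only [mem_coe, hW, mem_filter, mem_product, mem_powersetCard, mem_univ, true_and] at hw ⊢
      obtain ⟨⟨⟨-, hc⟩, hsub⟩, hfix⟩ := hw
      exact ⟨by rwa [hfix] at hsub, hc⟩
    · intro T hT
      rw [Finset.mem_coe, Finset.mem_powersetCard] at hT
      refine Finset.mem_filter.mpr ⟨Finset.mem_filter.mpr ⟨Finset.mem_product.mpr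
        ⟨mem_univ _, Finset.mem_powersetCard.mpr ⟨fun x _ => mem_univ x, hT.2⟩⟩, hT.1⟩, rfl⟩
    · intro w hw
      simp only [mem_coe, hW, mem_filter] at hw
      exact Prod.ext hw.2.symm rfl
    · intro T _
      rfl
  have hsnd : W.card ≤ 27 * n.choose 3 := by
    rw [Finset.card_eq_sum_card_fiberwise (f := Prod.snd)
      (t := (Finset.univ : Finset (Fin n)).powersetCard 3)
      (fun x hx => by simp only [mem_coe, hW, mem_filter, mem_product] at hx; exact hx.1.2)]
    have hb : ∀ T ∈ (Finset.univ : Finset (Fin n)).powersetCard 3,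
        (W.filter fun w => w.2 = T).card ≤ 27 := by
      intro T hT
      have hcard : (W.filter fun w => w.2 = T).card =
          (Finset.univ.filter fun v => T ⊆ nbhd C v).card := by
        apply Finset.card_nbij' Prod.fst (fun v => (v, T))
        · intro w hw
          simp only [mem_coe, hW, mem_filter, mem_product] at hw ⊢
          exact ⟨mem_univ _, hw.2 ▸ hw.1.2⟩
        · intro v hv
          simp only [mem_coe, mem_filter, mem_univ, true_and] at hv
          refine Finset.mem_filter.mpr ⟨Finset.mem_filter.mpr ⟨Finset.mem_product.mpr
            ⟨mem_univ _, hT⟩, hv⟩, rfl⟩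
        · intro w hw
          simp only [mem_coe, hW, mem_filter] at hw
          exact Prod.ext rfl hw.2.symm
        · intro v _
          rfl
      rw [hcard]
      obtain ⟨hTu, hT3⟩ := Finset.mem_powersetCard.mp hT
      obtain ⟨a, b, c, hab, hac, hbc, rfl⟩ := Finset.card_eq_three.mp hT3
      refine le_trans (Finset.card_le_card ?_) (common_le hC hab hac hbc)
      intro v hv
      simp only [mem_filter, mem_univ, true_and] at hv ⊢
      have ha := hv (by simp : a ∈ ({a, b, c} : Finset (Fin n)))
      have hb' := hv (by simp : b ∈ ({a, b, c} : Finset (Fin n)))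
      have hc' := hv (by simp : c ∈ ({a, b, c} : Finset (Fin n)))
      simp only [nbhd, mem_filter, mem_univ, true_and] at ha hb' hc'
      exact ⟨ha.symm', hb'.symm', hc'.symm'⟩
    calc ∑ T ∈ (Finset.univ : Finset (Fin n)).powersetCard 3,
          (W.filter fun w => w.2 = T).card
        ≤ ∑ _T ∈ (Finset.univ : Finset (Fin n)).powersetCard 3, 27 := Finset.sum_le_sum hb
      _ = 27 * n.choose 3 := by
          simp [Finset.card_powersetCard, mul_comm]
  omega

/-- Handshake-type bound: the code is at most twice the sum of degrees. -/
lemma card_le_two_sum (hC : Trifferent C)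
    (h2 : ∀ x ∈ C, (Finset.univ.filter fun i => x i = 2).card = 2) :
    C.card ≤ 2 * ∑ v : Fin n, (nbhd C v).card := by
  classical
  set T2 : Finset (Fin n × Fin n) :=
    (Finset.univ ×ˢ Finset.univ).filter fun pq => Adj C pq.1 pq.2 with hT2
  have e1 : C.card ≤ 2 * (C.image twos).card :=
    Finset.card_le_mul_card_image _ 2 (fun s _ => fiber_le hC s)
  have e2 : (C.image twos).card ≤ T2.card := by
    apply Finset.card_le_card_of_surjOn (fun pq => ({pq.1, pq.2} : Finset (Fin n)))
    intro s hs
    simp only [Finset.coe_image, Set.mem_image, Finset.mem_coe] at hs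
    obtain ⟨x, hx, rfl⟩ := hs
    have hc : (twos x).card = 2 := h2 x hx
    obtain ⟨p, q, hpq, hs⟩ := Finset.card_eq_two.mp hc
    refine ⟨(p, q), Finset.mem_coe.mpr (Finset.mem_filter.mpr ⟨Finset.mem_product.mpr
      ⟨mem_univ _, mem_univ _⟩, ⟨hpq, x, hx, hs⟩⟩), hs.symm⟩
  have e3 : T2.card = ∑ v : Fin n, (nbhd C v).card := by
    rw [Finset.card_eq_sum_card_fiberwise (f := Prod.fst) (t := Finset.univ)
      (fun x _ => mem_univ _)]
    refine Finset.sum_congr rfl fun v _ => ?_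
    apply Finset.card_nbij' Prod.snd (fun q => (v, q))
    · intro w hw
      simp only [mem_coe, hT2, mem_filter, mem_product, mem_univ, true_and, nbhd] at hw ⊢
      rw [← hw.2]; exact hw.1
    · intro q hq
      simp only [mem_coe, nbhd, mem_filter, mem_univ, true_and] at hq
      exact Finset.mem_filter.mpr ⟨Finset.mem_filter.mpr ⟨Finset.mem_product.mpr
        ⟨mem_univ _, mem_univ _⟩, hq⟩, rfl⟩
    · intro w hw
      simp only [mem_coe, mem_filter] at hw
      exact Prod.ext hw.2.symm rfl
    · intro q _
      rfl
  omega

lemma six_choose (m : ℕ) : 6 * (m + 2).choose 3 = (m + 2) * (m + 1) * m := by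
  have h1 := Nat.add_one_mul_choose_eq (m+1) 2
  have h2 := Nat.add_one_mul_choose_eq m 1
  simp only [Nat.choose_one_right, Nat.succ_eq_add_one] at h1 h2
  calc 6 * (m + 2).choose 3 = 2 * ((m + 1 + 1).choose (2 + 1) * (2 + 1)) := by ring_nf
    _ = 2 * ((m + 1 + 1) * (m + 1).choose 2) := by rw [← h1]
    _ = (m + 2) * ((m + 1).choose (1 + 1) * (1 + 1)) := by ring_nf
    _ = (m + 2) * ((m + 1) * m) := by rw [← h2]
    _ = (m + 2) * (m + 1) * m := by ring

lemma cube_le_choose (d : ℕ) : ((d : ℝ) - 2) ^ 3 ≤ 6 * (d.choose 3 : ℝ) := by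
  rcases le_or_gt d 2 with h | h
  · have h1 : ((d : ℝ) - 2) ≤ 0 := by
      have : (d : ℝ) ≤ 2 := by exact_mod_cast h
      linarith
    have h2 : ((d : ℝ) - 2) ^ 3 ≤ 0 := Odd.pow_nonpos (by decide) h1
    exact h2.trans (by positivity)
  · obtain ⟨m, rfl⟩ : ∃ m, d = m + 2 := ⟨d - 2, by omega⟩
    have hc : (6 * ((m + 2).choose 3) : ℝ) = ((m:ℝ) + 2) * ((m:ℝ) + 1) * m := by
      rw [show ((6:ℝ) * ((m + 2).choose 3 : ℕ)) = ((6 * (m + 2).choose 3 : ℕ) : ℝ) by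
        push_cast; ring, six_choose]
      push_cast; ring
    rw [show ((m + 2 : ℕ) : ℝ) - 2 = (m : ℝ) by push_cast; ring, hc]
    nlinarith [Nat.cast_nonneg (α := ℝ) m]

lemma six_choose_le_cube (n : ℕ) : 6 * n.choose 3 ≤ n ^ 3 := by
  match n with
  | 0 => decide
  | 1 => decide
  | (m+2) =>
    rw [six_choose]
    calc (m + 2) * (m + 1) * m ≤ (m + 2) * (m + 2) * (m + 2) := by
          apply Nat.mul_le_mul (Nat.mul_le_mul_left _ (by omega)) (by omega)
      _ = (m + 2) ^ 3 := by ring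

end TwoBdd

theorem two_bounded_trifferent_bound :
    ∃ c' : ℝ, ∀ n : ℕ, ∀ C : Finset (Fin n → Fin 3), Trifferent C →
      (∀ x ∈ C, (Finset.univ.filter fun i => x i = 2).card = 2) →
      (C.card : ℝ) ≤ c' * (n : ℝ) ^ ((5 : ℝ) / 3) := by
  classical
  use 12
  intro N C hC h2
  rcases C.eq_empty_or_nonempty with rfl | ⟨x0, hx0⟩
  · simp only [Finset.card_empty, Nat.cast_zero]
    positivity
  open TwoBdd in
  · have hn : 2 ≤ N := by
      have hcard := h2 x0 hx0
      calc 2 = (Finset.univ.filter fun i => x0 i = 2).card := hcard.symm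
        _ ≤ (Finset.univ : Finset (Fin N)).card := Finset.card_filter_le _ _
        _ = N := by simp
    set d : Fin N → ℕ := fun v => (nbhd C v).card with hd
    have hKn : C.card ≤ 2 * ∑ v : Fin N, d v := card_le_two_sum hC h2
    have hK : (C.card : ℝ) ≤ 2 * ∑ v : Fin N, (d v : ℝ) := by
      have : ((2 * ∑ v : Fin N, d v : ℕ) : ℝ) = 2 * ∑ v : Fin N, (d v : ℝ) := by push_cast; ring
      rw [← this]
      exact_mod_cast hKn
    have hchoose : ∑ v : Fin N, (d v).choose 3 ≤ 27 * N.choose 3 := sum_choose_le hC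
    have hA : ∑ v : Fin N, 6 * ((d v).choose 3) ≤ 27 * N ^ 3 := by
      calc ∑ v : Fin N, 6 * ((d v).choose 3) = 6 * ∑ v : Fin N, (d v).choose 3 :=
            (Finset.mul_sum _ _ _).symm
        _ ≤ 6 * (27 * N.choose 3) := Nat.mul_le_mul_left _ hchoose
        _ = 27 * (6 * N.choose 3) := by ring
        _ ≤ 27 * N ^ 3 := Nat.mul_le_mul_left _ (six_choose_le_cube N)
    have hsum : ∑ v : Fin N, ((d v : ℝ) - 2) ^ 3 ≤ 27 * (N : ℝ) ^ 3 := by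
      calc ∑ v : Fin N, ((d v : ℝ) - 2) ^ 3 ≤ ∑ v : Fin N, (6 * ((d v).choose 3 : ℝ)) :=
            Finset.sum_le_sum fun v _ => cube_le_choose (d v)
        _ = ((∑ v : Fin N, 6 * ((d v).choose 3) : ℕ) : ℝ) := by push_cast; ring
        _ ≤ ((27 * N ^ 3 : ℕ) : ℝ) := by exact_mod_cast hA
        _ = 27 * (N : ℝ) ^ 3 := by push_cast; ring
    -- analytic endgame
    have hN1 : (1 : ℝ) ≤ N := by exact_mod_cast Nat.one_le_of_lt hn
    have hN0 : (0 : ℝ) < N := by linarith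
    set b : Fin N → ℝ := fun v => max ((d v : ℝ) - 2) 0 with hb
    have hb0 : ∀ v, 0 ≤ b v := fun v => le_max_right _ _
    have hcube : ∑ v : Fin N, (b v) ^ 3 ≤ 35 * (N : ℝ) ^ 3 := by
      have hpt : ∀ v : Fin N, (b v) ^ 3 ≤ ((d v : ℝ) - 2) ^ 3 + 8 := by
        intro v
        rcases max_cases ((d v : ℝ) - 2) 0 with ⟨h1, -⟩ | ⟨h1, hlt⟩
        · rw [hb]; simp only; rw [h1]; linarith
        · rw [hb]; simp only; rw [h1]
          have hx : (0:ℝ) ≤ ((d v : ℝ) - 2) + 2 := by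
            have : (0:ℝ) ≤ (d v : ℝ) := Nat.cast_nonneg _
            linarith
          have h8 : (0:ℝ) ≤ (((d v : ℝ) - 2) + 2) * ((((d v : ℝ) - 2) - 1)^2 + 3) :=
            mul_nonneg hx (by positivity)
          nlinarith [h8]
      calc ∑ v : Fin N, (b v) ^ 3 ≤ ∑ v : Fin N, (((d v : ℝ) - 2) ^ 3 + 8) :=
            Finset.sum_le_sum fun v _ => hpt v
        _ = (∑ v : Fin N, ((d v : ℝ) - 2) ^ 3) + 8 * N := by
            rw [Finset.sum_add_distrib]; simp [mul_comm]
        _ ≤ 27 * (N : ℝ) ^ 3 + 8 * N := by linarith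
        _ ≤ 35 * (N : ℝ) ^ 3 := by
            have hN3 : (N:ℝ) ≤ (N:ℝ)^3 := le_self_pow₀ hN1 (by norm_num)
            linarith
    have hpow : (∑ v : Fin N, b v) ^ 3 ≤ 64 * (N : ℝ) ^ 5 := by
      have hjen := pow_sum_div_card_le_sum_pow (s := (Finset.univ : Finset (Fin N)))
        (f := b) (fun i _ => hb0 i) 2
      rw [Finset.card_univ, Fintype.card_fin] at hjen
      have h2' : (∑ v : Fin N, b v) ^ 3 ≤ (N : ℝ) ^ 2 * ∑ v : Fin N, (b v) ^ 3 := by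
        rw [div_le_iff₀ (by positivity)] at hjen
        calc (∑ v : Fin N, b v) ^ 3 = (∑ v : Fin N, b v) ^ (2 + 1) := by norm_num
          _ ≤ (∑ v : Fin N, (b v) ^ (2+1)) * (N:ℝ)^2 := hjen
          _ = (N : ℝ) ^ 2 * ∑ v : Fin N, (b v) ^ 3 := by ring_nf
      calc (∑ v : Fin N, b v) ^ 3 ≤ (N : ℝ) ^ 2 * ∑ v : Fin N, (b v) ^ 3 := h2'
        _ ≤ (N : ℝ) ^ 2 * (35 * (N : ℝ) ^ 3) := by
            apply mul_le_mul_of_nonneg_left hcube (by positivity)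
        _ ≤ 64 * (N : ℝ) ^ 5 := by nlinarith [pow_nonneg (le_of_lt hN0) 5]
    have hrpow3 : ((N : ℝ) ^ ((5:ℝ)/3)) ^ (3 : ℕ) = (N : ℝ) ^ (5 : ℕ) := by
      rw [← Real.rpow_natCast ((N : ℝ) ^ ((5:ℝ)/3)) 3, ← Real.rpow_mul (le_of_lt hN0),
        ← Real.rpow_natCast (N : ℝ) 5]
      norm_num
    have hsb : ∑ v : Fin N, b v ≤ 4 * (N : ℝ) ^ ((5:ℝ)/3) := by
      have h0 : (0:ℝ) ≤ ∑ v : Fin N, b v := Finset.sum_nonneg fun i _ => hb0 i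
      have h1 : (0:ℝ) ≤ 4 * (N : ℝ) ^ ((5:ℝ)/3) := by positivity
      rw [← pow_le_pow_iff_left₀ h0 h1 (three_ne_zero)]
      calc (∑ v : Fin N, b v) ^ 3 ≤ 64 * (N : ℝ) ^ 5 := hpow
        _ = (4 * (N : ℝ) ^ ((5:ℝ)/3)) ^ 3 := by rw [mul_pow, hrpow3]; norm_num
    have hdsum : ∑ v : Fin N, (d v : ℝ) ≤ (∑ v : Fin N, b v) + 2 * N := by
      calc ∑ v : Fin N, (d v : ℝ) ≤ ∑ v : Fin N, (b v + 2) := by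
            apply Finset.sum_le_sum
            intro i _
            have := le_max_left ((d i : ℝ) - 2) 0
            rw [hb]; simp only; linarith
        _ = (∑ v : Fin N, b v) + 2 * N := by rw [Finset.sum_add_distrib]; simp [mul_comm]
    have hNle : (N : ℝ) ≤ (N : ℝ) ^ ((5:ℝ)/3) := by
      calc (N : ℝ) = (N : ℝ) ^ (1:ℝ) := (Real.rpow_one _).symm
        _ ≤ (N : ℝ) ^ ((5:ℝ)/3) := Real.rpow_le_rpow_of_exponent_le hN1 (by norm_num)
    calc (C.card : ℝ) ≤ 2 * ∑ v : Fin N, (d v : ℝ) := hK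
      _ ≤ 2 * ((4 * (N : ℝ) ^ ((5:ℝ)/3)) + 2 * N) := by linarith
      _ ≤ 12 * (N : ℝ) ^ ((5:ℝ)/3) := by linarith
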